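/- Let E = ℝ^p be a Euclidean space, θ̂ ∈ E, A : E → E a continuous linear map, D_n and D_c finite sets, and μ ≥ 0. For each z ∈ D_n, let y_z ∈ {0,1} and let φ_z : E → ℝ be differentiable at θ̂ with 0 < φ_z(θ̂) < 1; set L_z := (θ ↦ −log(φ_z(θ))) and L_z^δ := (θ ↦ −log(1 − φ_z(θ))) if y_z = 1, and L_z := (θ ↦ −log(1 − φ_z(θ))) and L_z^δ := (θ ↦ −log(φ_z(θ))) if y_z = 0. For each v ∈ D_c let g_v ∈ E, and define I_up(z, v) := ⟪g_v, A(∇L_z(θ̂))⟫ and I_rel(z, v) := ⟪g_v, A(∇L_z(θ̂) − ∇L_z^δ(θ̂))⟫. If Σ_{v ∈ D_c} (−I_up(z, v)) ≥ μ for every z ∈ D_n, then Σ_{z ∈ D_n} Σ_{v ∈ D_c} (I_up(z, v) − I_rel(z, v)) ≥ μ · Σ_{z ∈ D_n} min( φ_z(θ̂)/(1 − φ_z(θ̂)), (1 − φ_z(θ̂))/φ_z(θ̂) ) ≥ 0. (This is the exact inequality content of Theorem 2: relabelling the flagged binary nodes can lead to a lower approximate risk on the clean set than removing them.) -/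

import Mathlib

open Real
open scoped RealInnerProductSpace

private lemma gradient_smul_of_fderiv {p : ℕ} {F G : EuclideanSpace ℝ (Fin p) → ℝ}
    {x : EuclideanSpace ℝ (Fin p)} {c : ℝ}
    (h : fderiv ℝ F x = c • fderiv ℝ G x) :
    gradient F x = c • gradient G x := by
  unfold gradient
  rw [h, map_smul]

/-- Theorem 2 (binary case): relabelling the flagged binary nodes can lead to a
lower approximate risk on the clean set than removing them.  With
`I_up(z, v) = ⟪g_v, A ∇L_z(θ̂)⟫` and `I_rel(z, v) = ⟪g_v, A(∇L_z(θ̂) − ∇L_z^δ(θ̂))⟫`,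
if `∑_{v ∈ D_c} (−I_up(z, v)) ≥ μ` for every flagged `z`, then
`∑_z ∑_v (I_up z v − I_rel z v) ≥ μ · ∑_z min(φ_z/(1−φ_z), (1−φ_z)/φ_z) ≥ 0`. -/
theorem deglif_relabel_binary {p : ℕ} {α β : Type*}
    (Dn : Finset α) (Dc : Finset β)
    (θhat : EuclideanSpace ℝ (Fin p))
    (A : EuclideanSpace ℝ (Fin p) →L[ℝ] EuclideanSpace ℝ (Fin p))
    (μ : ℝ) (hμ : 0 ≤ μ)
    (y : α → Bool) (φ : α → EuclideanSpace ℝ (Fin p) → ℝ)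
    (hdiff : ∀ z ∈ Dn, DifferentiableAt ℝ (φ z) θhat)
    (h0 : ∀ z ∈ Dn, 0 < φ z θhat) (h1 : ∀ z ∈ Dn, φ z θhat < 1)
    (g : β → EuclideanSpace ℝ (Fin p))
    (L Lδ : α → EuclideanSpace ℝ (Fin p) → ℝ)
    (hL : ∀ z ∈ Dn, L z = if y z then (fun θ => -Real.log (φ z θ))
                          else (fun θ => -Real.log (1 - φ z θ)))
    (hLδ : ∀ z ∈ Dn, Lδ z = if y z then (fun θ => -Real.log (1 - φ z θ))
                            else (fun θ => -Real.log (φ z θ)))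
    (Iup Irel : α → β → ℝ)
    (hIup : ∀ z v, Iup z v = ⟪g v, A (gradient (L z) θhat)⟫)
    (hIrel : ∀ z v, Irel z v = ⟪g v, A (gradient (L z) θhat - gradient (Lδ z) θhat)⟫)
    (hflag : ∀ z ∈ Dn, μ ≤ ∑ v ∈ Dc, -(Iup z v)) :
    μ * (∑ z ∈ Dn, min (φ z θhat / (1 - φ z θhat)) ((1 - φ z θhat) / φ z θhat))
        ≤ ∑ z ∈ Dn, ∑ v ∈ Dc, (Iup z v - Irel z v)
    ∧ 0 ≤ μ * (∑ z ∈ Dn, min (φ z θhat / (1 - φ z θhat)) ((1 - φ z θhat) / φ z θhat)) := by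
  have hminpos : ∀ z ∈ Dn,
      0 ≤ min (φ z θhat / (1 - φ z θhat)) ((1 - φ z θhat) / φ z θhat) := by
    intro z hz
    have ht0 := h0 z hz
    have ht1 : 0 < 1 - φ z θhat := by linarith [h1 z hz]
    exact le_min (div_nonneg ht0.le ht1.le) (div_nonneg ht1.le ht0.le)
  have key : ∀ z ∈ Dn,
      μ * min (φ z θhat / (1 - φ z θhat)) ((1 - φ z θhat) / φ z θhat)
        ≤ ∑ v ∈ Dc, (Iup z v - Irel z v) := by
    intro z hz
    set t := φ z θhat with htdef
    have ht0 := h0 z hz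
    have ht1 : 0 < 1 - t := by linarith [h1 z hz]
    have hφd := (hdiff z hz).hasFDerivAt
    set f' := fderiv ℝ (φ z) θhat with hf'
    -- ratio r = -c where gradient Lδ = c • gradient L
    obtain ⟨r, hr0, hmin_le_r, hgrad⟩ :
        ∃ r : ℝ, 0 < r ∧ min (t / (1 - t)) ((1 - t) / t) ≤ r ∧
          gradient (Lδ z) θhat = (-r) • gradient (L z) θhat := by
      cases hy : y z
      · -- y = false : L = -log(1-φ), Lδ = -log φ
        refine ⟨(1 - t) / t, div_pos ht1 ht0, min_le_right _ _, ?_⟩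
        apply gradient_smul_of_fderiv
        have hdL : fderiv ℝ (L z) θhat = (1 - t)⁻¹ • f' := by
          rw [hL z hz]
          simp only [hy, if_false]
          have : HasFDerivAt (fun θ => -Real.log (1 - φ z θ))
              ((1 - t)⁻¹ • f') θhat := by
            have := ((hφd.const_sub 1).log (by simp [htdef]; linarith)).neg
            simpa [Pi.neg_def, htdef] using this
          exact this.fderiv
        have hdLδ : fderiv ℝ (Lδ z) θhat = (-t⁻¹) • f' := by
          rw [hLδ z hz]
          simp only [hy, if_false]
          have : HasFDerivAt (fun θ => -Real.log (φ z θ)) ((-t⁻¹) • f') θhat := by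
            have := (hφd.log (by simp [htdef]; linarith)).neg
            simpa [neg_smul, Pi.neg_def, htdef] using this
          exact this.fderiv
        rw [hdL, hdLδ, smul_smul]
        congr 1
        field_simp
        try ring
      · -- y = true : L = -log φ, Lδ = -log(1-φ)
        refine ⟨t / (1 - t), div_pos ht0 ht1, min_le_left _ _, ?_⟩
        apply gradient_smul_of_fderiv
        have hdL : fderiv ℝ (L z) θhat = (-t⁻¹) • f' := by
          rw [hL z hz]
          simp only [hy, if_true]
          have : HasFDerivAt (fun θ => -Real.log (φ z θ)) ((-t⁻¹) • f') θhat := by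
            have := (hφd.log (by simp [htdef]; linarith)).neg
            simpa [neg_smul, Pi.neg_def, htdef] using this
          exact this.fderiv
        have hdLδ : fderiv ℝ (Lδ z) θhat = (1 - t)⁻¹ • f' := by
          rw [hLδ z hz]
          simp only [hy, if_true]
          have : HasFDerivAt (fun θ => -Real.log (1 - φ z θ))
              ((1 - t)⁻¹ • f') θhat := by
            have := ((hφd.const_sub 1).log (by simp [htdef]; linarith)).neg
            simpa [Pi.neg_def, htdef] using this
          exact this.fderiv
        rw [hdL, hdLδ, smul_smul]
        congr 1
        field_simp
        exact (mul_inv_cancel₀ ht0.ne').symm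
    -- Iup z v - Irel z v = r * (-(Iup z v))
    have hdiffIv : ∀ v, Iup z v - Irel z v = r * (-(Iup z v)) := by
      intro v
      rw [hIup, hIrel, hgrad]
      rw [show gradient (L z) θhat - (-r) • gradient (L z) θhat
            = (1 + r) • gradient (L z) θhat by rw [neg_smul, sub_neg_eq_add]; module]
      rw [map_smul, real_inner_smul_right]
      ring
    have hsum : ∑ v ∈ Dc, (Iup z v - Irel z v) = r * ∑ v ∈ Dc, -(Iup z v) := by
      rw [Finset.mul_sum]
      exact Finset.sum_congr rfl fun v _ => hdiffIv v
    calc μ * min (t / (1 - t)) ((1 - t) / t)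
        ≤ μ * r := by
          exact mul_le_mul_of_nonneg_left hmin_le_r hμ
      _ ≤ r * ∑ v ∈ Dc, -(Iup z v) := by
          rw [mul_comm μ r]
          exact mul_le_mul_of_nonneg_left (hflag z hz) hr0.le
      _ = ∑ v ∈ Dc, (Iup z v - Irel z v) := hsum.symm
  constructor
  · calc μ * ∑ z ∈ Dn, min (φ z θhat / (1 - φ z θhat)) ((1 - φ z θhat) / φ z θhat)
        = ∑ z ∈ Dn, μ * min (φ z θhat / (1 - φ z θhat)) ((1 - φ z θhat) / φ z θhat) :=
          Finset.mul_sum _ _ _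
      _ ≤ ∑ z ∈ Dn, ∑ v ∈ Dc, (Iup z v - Irel z v) := Finset.sum_le_sum key
  · exact mul_nonneg hμ (Finset.sum_nonneg hminpos)
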